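/- Let K, V ⊂ R^m be cubes with K ⊂ 3V (or more generally two cubes with ℓ(K) ≤ ℓ(V) whose distance is at most 2ℓ(V)). Then ∫_K ∫_V |x - y|^{-m} dx dy ≤ C(m) |K| (1 + log(ℓ(V)/ℓ(K))) — in particular, for disjoint sibling dyadic children V', V'' of a common dyadic cube V one has ∫_{V'} ∫_{V''} |x-y|^{-m} dx dy ≤ C(m)|V|. -/

import Mathlib

open MeasureTheory Metric
open scoped ENNReal

namespace Stmt4Aux

lemma meas_f (m : ℕ) (y : Fin m → ℝ) :
    Measurable fun x : Fin m → ℝ => ENNReal.ofReal (dist x y ^ (-(m:ℝ))) :=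
  ((measurable_id.dist measurable_const).pow measurable_const).ennreal_ofReal

lemma rpow_anti (m : ℕ) {a b : ℝ} (ha : 0 < a) (hab : a ≤ b) :
    b ^ (-(m:ℝ)) ≤ a ^ (-(m:ℝ)) :=
  Real.rpow_le_rpow_of_nonpos ha hab (neg_nonpos.mpr (Nat.cast_nonneg m))

end Stmt4Aux

namespace Stmt4Aux

lemma shell_step (m : ℕ) (y : Fin m → ℝ) {a : ℝ} (ha : 0 < a) :
    ∫⁻ x in closedBall y (2*a) \ ball y a, ENNReal.ofReal (dist x y ^ (-(m:ℝ)))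
      ≤ ENNReal.ofReal (4^m) := by
  calc ∫⁻ x in closedBall y (2*a) \ ball y a, ENNReal.ofReal (dist x y ^ (-(m:ℝ)))
      ≤ ∫⁻ _x in closedBall y (2*a) \ ball y a, ENNReal.ofReal (a ^ (-(m:ℝ))) := by
        apply setLIntegral_mono measurable_const
        intro x hx
        exact ENNReal.ofReal_le_ofReal
          (rpow_anti m ha (by simpa [mem_ball, not_lt] using hx.2))
    _ = ENNReal.ofReal (a ^ (-(m:ℝ))) * volume (closedBall y (2*a) \ ball y a) :=
        setLIntegral_const _ _
    _ ≤ ENNReal.ofReal (a ^ (-(m:ℝ))) * volume (closedBall y (2*a)) := by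
        gcongr; exact Set.diff_subset
    _ ≤ ENNReal.ofReal (4^m) := by
        rw [Real.volume_pi_closedBall y (by positivity : (0:ℝ) ≤ 2*a), Fintype.card_fin,
          ← ENNReal.ofReal_mul (Real.rpow_nonneg ha.le _)]
        apply ENNReal.ofReal_le_ofReal
        have h1 : (2*(2*a))^m = 4^m * a^m := by ring
        rw [h1, ← Real.rpow_natCast a m,
          show a ^ (-(m:ℝ)) * ((4:ℝ)^m * a^(m:ℝ)) = (4:ℝ)^m * (a^(-(m:ℝ)) * a^(m:ℝ)) by ring,
          ← Real.rpow_add ha, neg_add_cancel, Real.rpow_zero, mul_one]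

lemma shell_upper (m : ℕ) (hm : 0 < m) (y : Fin m → ℝ) {d : ℝ} (hd : 0 < d) (N : ℕ) :
    ∫⁻ x in closedBall y (d * 2^N) \ ball y d, ENNReal.ofReal (dist x y ^ (-(m:ℝ)))
      ≤ N * ENNReal.ofReal (4^m) := by
  haveI : Nonempty (Fin m) := ⟨⟨0, hm⟩⟩
  induction N with
  | zero =>
      have h0 : volume (closedBall y (d * 2^0) \ ball y d) = 0 := by
        simp only [pow_zero, mul_one, closedBall_diff_ball]
        exact Measure.addHaar_sphere volume y d
      rw [setLIntegral_measure_zero _ _ h0]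
      simp
  | succ n ih =>
      have hsub : closedBall y (d*2^(n+1)) \ ball y d ⊆
          (closedBall y (d*2^n) \ ball y d) ∪ (closedBall y (d*2^(n+1)) \ ball y (d*2^n)) := by
        intro x hx
        by_cases h : x ∈ ball y (d*2^n)
        · exact Or.inl ⟨ball_subset_closedBall h, hx.2⟩
        · exact Or.inr ⟨hx.1, h⟩
      have e2 : d*2^(n+1) = 2*(d*2^n) := by ring
      calc ∫⁻ x in closedBall y (d*2^(n+1)) \ ball y d, ENNReal.ofReal (dist x y ^ (-(m:ℝ)))
          ≤ ∫⁻ x in (closedBall y (d*2^n) \ ball y d) ∪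
              (closedBall y (d*2^(n+1)) \ ball y (d*2^n)),
              ENNReal.ofReal (dist x y ^ (-(m:ℝ))) := lintegral_mono_set hsub
        _ ≤ (∫⁻ x in closedBall y (d*2^n) \ ball y d, ENNReal.ofReal (dist x y ^ (-(m:ℝ))))
            + ∫⁻ x in closedBall y (d*2^(n+1)) \ ball y (d*2^n),
              ENNReal.ofReal (dist x y ^ (-(m:ℝ))) := lintegral_union_le _ _ _
        _ ≤ n * ENNReal.ofReal (4^m) + ENNReal.ofReal (4^m) := by
            refine add_le_add ih ?_
            rw [e2]
            exact shell_step m y (by positivity)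
        _ = (n+1 : ℕ) * ENNReal.ofReal (4^m) := by
            rw [Nat.cast_succ, add_mul, one_mul]

end Stmt4Aux

namespace Stmt4Aux

lemma inner_div (m : ℕ) (hm : 0 < m) (y : Fin m → ℝ) {ρ : ℝ} (hρ : 0 < ρ) :
    ∫⁻ x in closedBall y ρ, ENNReal.ofReal (dist x y ^ (-(m:ℝ))) = ∞ := by
  set f : (Fin m → ℝ) → ℝ≥0∞ := fun x => ENNReal.ofReal (dist x y ^ (-(m:ℝ))) with hf
  have key : ∀ n : ℕ, (n : ℝ≥0∞) ≤ ∫⁻ x in closedBall y ρ \ closedBall y (ρ/2^n), f x := by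
    intro n
    induction n with
    | zero => simp
    | succ n ih =>
        set a : ℝ := ρ/2^n with ha
        have hapos : 0 < a := by positivity
        have hstep : ρ/2^(n+1) = a/2 := by rw [ha]; ring
        have hsub : (closedBall y ρ \ closedBall y a) ∪
            (closedBall y a \ closedBall y (a/2)) ⊆ closedBall y ρ \ closedBall y (a/2) := by
          rintro x (hx | hx)
          · exact ⟨hx.1, fun h => hx.2 (closedBall_subset_closedBall (by linarith) h)⟩
          · refine ⟨closedBall_subset_closedBall ?_ hx.1, hx.2⟩
            rw [ha]
            calc ρ/2^n ≤ ρ/1 := by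
                  apply div_le_div_of_nonneg_left hρ.le one_pos
                  exact one_le_pow₀ one_le_two
              _ = ρ := div_one ρ
        have hdisj : Disjoint (closedBall y ρ \ closedBall y a)
            (closedBall y a \ closedBall y (a/2)) := by
          apply Set.disjoint_left.mpr
          rintro x hx1 hx2
          exact hx1.2 hx2.1
        have hone : 1 ≤ ∫⁻ x in closedBall y a \ closedBall y (a/2), f x := by
          have hmono : ∫⁻ _x in closedBall y a \ closedBall y (a/2),
              ENNReal.ofReal (a ^ (-(m:ℝ)))
                ≤ ∫⁻ x in closedBall y a \ closedBall y (a/2), f x := by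
            apply setLIntegral_mono (meas_f m y)
            intro x hx
            apply ENNReal.ofReal_le_ofReal
            apply rpow_anti m _ hx.1
            have := hx.2
            simp only [mem_closedBall, not_le] at this
            linarith
          rw [setLIntegral_const] at hmono
          refine le_trans ?_ hmono
          have hvol : volume (closedBall y a \ closedBall y (a/2))
              = ENNReal.ofReal ((2*a)^m - a^m) := by
            rw [measure_diff (closedBall_subset_closedBall (by linarith))
              measurableSet_closedBall.nullMeasurableSet
              (measure_closedBall_lt_top.ne),
              Real.volume_pi_closedBall y (by positivity : (0:ℝ) ≤ a/2),
              Real.volume_pi_closedBall y (by positivity : (0:ℝ) ≤ a),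
              Fintype.card_fin,
              show 2*(a/2) = a by ring,
              ← ENNReal.ofReal_sub _ (by positivity)]
          rw [hvol, ← ENNReal.ofReal_mul (Real.rpow_nonneg hapos.le _)]
          rw [ENNReal.one_le_ofReal]
          have he : a ^ (-(m:ℝ)) * ((2*a)^m - a^m) = 2^m - 1 := by
            have h2 : (2*a)^m = 2^m * a^m := by ring
            rw [h2, ← Real.rpow_natCast a m,
              show a ^ (-(m:ℝ)) * ((2:ℝ)^m * a^(m:ℝ) - a^(m:ℝ))
                = ((2:ℝ)^m - 1) * (a^(-(m:ℝ)) * a^(m:ℝ)) by ring,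
              ← Real.rpow_add hapos, neg_add_cancel, Real.rpow_zero, mul_one]
          rw [he]
          have : (2:ℝ)^1 ≤ 2^m := pow_le_pow_right₀ one_le_two hm
          simp at this ⊢
          linarith
        calc ((n+1 : ℕ) : ℝ≥0∞) = (n : ℝ≥0∞) + 1 := by push_cast; ring
          _ ≤ (∫⁻ x in closedBall y ρ \ closedBall y a, f x)
              + ∫⁻ x in closedBall y a \ closedBall y (a/2), f x := add_le_add ih hone
          _ = ∫⁻ x in (closedBall y ρ \ closedBall y a) ∪
              (closedBall y a \ closedBall y (a/2)), f x := by
            rw [lintegral_union (measurableSet_closedBall.diff measurableSet_closedBall) hdisj]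
          _ ≤ _ := by rw [hstep]; exact lintegral_mono_set hsub
  by_contra hne
  obtain ⟨n, hn⟩ := ENNReal.exists_nat_gt hne
  exact absurd (le_trans (key n) (lintegral_mono_set Set.diff_subset)) (not_le.mpr hn)

end Stmt4Aux

namespace Stmt4Aux

lemma slab (m : ℕ) (hm : 0 < m) (cK cV : Fin m → ℝ) {ℓK rV s : ℝ}
    (hℓK : 0 < ℓK) (hrV : 0 ≤ rV) (hs : 0 < s) :
    volume {y : Fin m → ℝ | y ∈ closedBall cK (ℓK/2) ∧ rV < dist y cV ∧ dist y cV ≤ rV + s}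
      ≤ m * ENNReal.ofReal (2*s*ℓK^(m-1)) := by
  set T : Fin m → Set (Fin m → ℝ) := fun i => Set.pi Set.univ (fun j =>
    if j = i then (Set.Icc (cV i + rV) (cV i + (rV+s)) ∪ Set.Icc (cV i - (rV+s)) (cV i - rV))
    else Set.Icc (cK j - ℓK/2) (cK j + ℓK/2)) with hT
  have hsub : {y : Fin m → ℝ | y ∈ closedBall cK (ℓK/2) ∧ rV < dist y cV ∧ dist y cV ≤ rV + s}
      ⊆ ⋃ i, T i := by
    rintro y ⟨hyK, hylo, hyhi⟩
    have h1 : ¬ (∀ i, dist (y i) (cV i) ≤ rV) := by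
      intro h
      exact absurd ((dist_pi_le_iff hrV).mpr h) (not_le.mpr hylo)
    push_neg at h1
    obtain ⟨i, hi⟩ := h1
    refine Set.mem_iUnion.mpr ⟨i, ?_⟩
    rw [hT]
    intro j _
    by_cases hji : j = i
    · subst hji
      simp only [if_pos rfl]
      have h2 : dist (y j) (cV j) ≤ rV + s := le_trans (dist_le_pi_dist y cV j) hyhi
      rw [Real.dist_eq] at hi h2
      rcases abs_le.mp h2 with ⟨hl, hr⟩
      rcases lt_abs.mp hi with h | h
      · exact Or.inl ⟨by linarith, by linarith⟩
      · exact Or.inr ⟨by linarith, by linarith⟩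
    · simp only [if_neg hji]
      have h2 : dist (y j) (cK j) ≤ ℓK/2 := le_trans (dist_le_pi_dist y cK j)
        (mem_closedBall.mp hyK)
      rw [Real.dist_eq] at h2
      rcases abs_le.mp h2 with ⟨hl, hr⟩
      exact ⟨by linarith, by linarith⟩
  have hTb : ∀ i, volume (T i) ≤ ENNReal.ofReal (2*s*ℓK^(m-1)) := by
    intro i
    rw [hT]
    rw [volume_pi_pi]
    have hprod : ∏ j, volume (if j = i
        then (Set.Icc (cV i + rV) (cV i + (rV+s)) ∪ Set.Icc (cV i - (rV+s)) (cV i - rV))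
        else Set.Icc (cK j - ℓK/2) (cK j + ℓK/2))
        = volume ((Set.Icc (cV i + rV) (cV i + (rV+s)) ∪ Set.Icc (cV i - (rV+s)) (cV i - rV)))
          * ∏ j ∈ Finset.univ.erase i, volume (Set.Icc (cK j - ℓK/2) (cK j + ℓK/2)) := by
      rw [← Finset.mul_prod_erase Finset.univ _ (Finset.mem_univ i), if_pos rfl]
      congr 1
      apply Finset.prod_congr rfl
      intro j hj
      rw [if_neg (Finset.ne_of_mem_erase hj)]
    rw [hprod]
    have h1 : volume ((Set.Icc (cV i + rV) (cV i + (rV+s)) ∪ Set.Icc (cV i - (rV+s)) (cV i - rV)))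
        ≤ ENNReal.ofReal (2*s) := by
      refine le_trans (measure_union_le _ _) ?_
      rw [Real.volume_Icc, Real.volume_Icc]
      rw [← ENNReal.ofReal_add (by linarith) (by linarith)]
      apply ENNReal.ofReal_le_ofReal
      ring_nf
      nlinarith [hs.le]
    have h2 : ∏ j ∈ Finset.univ.erase i, volume (Set.Icc (cK j - ℓK/2) (cK j + ℓK/2))
        = ENNReal.ofReal ℓK ^ (m-1) := by
      rw [Finset.prod_congr rfl (fun j _ => by rw [Real.volume_Icc,
        show cK j + ℓK/2 - (cK j - ℓK/2) = ℓK by ring]), Finset.prod_const,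
        Finset.card_erase_of_mem (Finset.mem_univ i), Finset.card_univ, Fintype.card_fin]
    rw [h2]
    calc volume _ * ENNReal.ofReal ℓK ^ (m-1) ≤ ENNReal.ofReal (2*s) * ENNReal.ofReal ℓK ^ (m-1) := by
          gcongr
      _ = ENNReal.ofReal (2*s*ℓK^(m-1)) := by
          rw [← ENNReal.ofReal_pow hℓK.le, ← ENNReal.ofReal_mul (by positivity)]
  calc volume {y : Fin m → ℝ | y ∈ closedBall cK (ℓK/2) ∧ rV < dist y cV ∧ dist y cV ≤ rV + s}
      ≤ volume (⋃ i, T i) := measure_mono hsub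
    _ ≤ ∑' i, volume (T i) := measure_iUnion_le T
    _ = ∑ i, volume (T i) := tsum_fintype _
    _ ≤ ∑ _i : Fin m, ENNReal.ofReal (2*s*ℓK^(m-1)) := Finset.sum_le_sum (fun i _ => hTb i)
    _ = m * ENNReal.ofReal (2*s*ℓK^(m-1)) := by
        rw [Finset.sum_const, Finset.card_univ, Fintype.card_fin, nsmul_eq_mul]

end Stmt4Aux

namespace Stmt4Aux

lemma key_k (k : ℕ) : ((k:ℝ)+1) ≤ 2*(3/2)^k := by
  induction k with
  | zero => norm_num
  | succ n ih =>
      have h1 : (1:ℝ) ≤ (3/2)^n := one_le_pow₀ (by norm_num)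
      push_cast
      rw [pow_succ]
      nlinarith

lemma key_k' (k : ℕ) : ((k:ℝ)+1) * (1/2)^k ≤ 2*(3/4)^k := by
  have h := key_k k
  have h2 : ((k:ℝ)+1) * (1/2)^k ≤ (2*(3/2)^k) * (1/2)^k :=
    mul_le_mul_of_nonneg_right h (by positivity)
  refine h2.trans (le_of_eq ?_)
  rw [mul_assoc, ← mul_pow]
  norm_num

lemma geom_inv : (1 - ENNReal.ofReal (3/4))⁻¹ = ENNReal.ofReal 4 := by
  have h1 : (1 : ℝ≥0∞) - ENNReal.ofReal (3/4) = ENNReal.ofReal (1/4) := by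
    rw [← ENNReal.ofReal_one, ← ENNReal.ofReal_sub _ (by norm_num)]
    norm_num
  rw [h1, ← ENNReal.ofReal_inv_of_pos (by norm_num)]
  norm_num

lemma series_aux (c : ℝ) (hc : 0 ≤ c) :
    ∑' k:ℕ, ENNReal.ofReal (((k:ℝ)+1) * (1/2)^k * c) ≤ ENNReal.ofReal (8*c) := by
  calc ∑' k:ℕ, ENNReal.ofReal (((k:ℝ)+1) * (1/2)^k * c)
      ≤ ∑' k:ℕ, ENNReal.ofReal (2*c) * (ENNReal.ofReal (3/4))^k := by
        apply ENNReal.tsum_le_tsum; intro k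
        rw [← ENNReal.ofReal_pow (by norm_num), ← ENNReal.ofReal_mul (by positivity)]
        apply ENNReal.ofReal_le_ofReal
        have hk := key_k' k
        have := mul_le_mul_of_nonneg_right hk hc
        nlinarith [pow_nonneg (by norm_num : (0:ℝ) ≤ 3/4) k]
    _ = ENNReal.ofReal (2*c) * (1 - ENNReal.ofReal (3/4))⁻¹ := by
        rw [ENNReal.tsum_mul_left, ENNReal.tsum_geometric]
    _ = ENNReal.ofReal (8*c) := by
        rw [geom_inv, ← ENNReal.ofReal_mul (by positivity)]
        congr 1
        ring

end Stmt4Aux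


set_option maxHeartbeats 1000000 in
open Stmt4Aux in
/-- For cubes `K = B̄(c_K, ℓ_K/2)`, `V = B̄(c_V, ℓ_V/2)` in ℝ^m (ℓ^∞ metric) with
`ℓ_K ≤ ℓ_V` and `K ⊆ 3V`:
`∫_K ∫_V |x-y|^{-m} dx dy ≤ C(m) |K| (1 + log(ℓ_V/ℓ_K))`, with `|K| = ℓ_K^m`.
(In particular this covers two distinct dyadic children of a common cube.) -/
theorem stmt4 (m : ℕ) (hm : 0 < m) :
    ∃ C : ℝ, 0 < C ∧ ∀ (cK cV : Fin m → ℝ) (ℓK ℓV : ℝ), 0 < ℓK → ℓK ≤ ℓV →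
      closedBall cK (ℓK / 2) ⊆ closedBall cV (3 * ℓV / 2) →
      (∫ y in closedBall cK (ℓK / 2), ∫ x in closedBall cV (ℓV / 2),
          dist x y ^ (-(m : ℝ)))
        ≤ C * ℓK ^ m * (1 + Real.log (ℓV / ℓK)) := by
  refine ⟨4^m * (16*m+4), by positivity, ?_⟩
  intro cK cV ℓK ℓV hℓK hKV h3V
  have hℓV : 0 < ℓV := lt_of_lt_of_le hℓK hKV
  haveI : Nonempty (Fin m) := ⟨⟨0, hm⟩⟩
  set A : ℝ := 2 * 4^m with hA
  have hApos : 0 < A := by positivity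
  set D : (Fin m → ℝ) → ℝ := fun y => max (dist y cV - ℓV/2) 0 with hD
  have hDmeas : Measurable D := ((measurable_id.dist measurable_const).sub measurable_const).max
    measurable_const
  have hDnn : ∀ y, 0 ≤ D y := fun y => le_max_right _ _
  set h : (Fin m → ℝ) → ℝ := fun y => A * (1 + max 0 (Real.log (2*ℓV / D y))) with hh
  have hlogm : Measurable fun y => max 0 (Real.log (2*ℓV / D y)) :=
    measurable_const.max ((measurable_const.div hDmeas).log)
  have hhmeas : Measurable h := measurable_const.mul (measurable_const.add hlogm)
  have hhnn : ∀ y, 0 ≤ h y := by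
    intro y
    have h1 : (0:ℝ) ≤ max 0 (Real.log (2*ℓV / D y)) := le_max_left _ _
    have := hApos.le
    rw [hh]
    simp only
    nlinarith
  set g : (Fin m → ℝ) → ℝ :=
    fun y => ∫ x in closedBall cV (ℓV/2), dist x y ^ (-(m:ℝ)) with hg
  have hgrepr : ∀ y, g y =
      (∫⁻ x in closedBall cV (ℓV/2), ENNReal.ofReal (dist x y ^ (-(m:ℝ)))).toReal := by
    intro y
    rw [hg]
    exact integral_eq_lintegral_of_nonneg_ae
      (Filter.Eventually.of_forall fun x => Real.rpow_nonneg dist_nonneg _)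
      ((measurable_id.dist measurable_const).pow measurable_const).aestronglyMeasurable
  have hg_nonneg : ∀ y, 0 ≤ g y :=
    fun y => integral_nonneg fun x => Real.rpow_nonneg dist_nonneg _
  -- Step B : pointwise a.e. bound
  have hpt : ∀ᵐ y, y ∈ closedBall cK (ℓK/2) → g y ≤ h y := by
    have hsph : ∀ᵐ y : Fin m → ℝ, y ∉ sphere cV (ℓV/2) :=
      measure_eq_zero_iff_ae_notMem.mp (Measure.addHaar_sphere volume cV (ℓV/2))
    filter_upwards [hsph] with y hy hyK
    rcases lt_trichotomy (dist y cV) (ℓV/2) with hlt | heq | hgt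
    · -- y inside the open ball : inner lintegral is infinite, g y = 0
      have hρ : 0 < ℓV/2 - dist y cV := by linarith
      have hsubV : closedBall y (ℓV/2 - dist y cV) ⊆ closedBall cV (ℓV/2) :=
        closedBall_subset_closedBall' (by linarith)
      have htop : ∫⁻ x in closedBall cV (ℓV/2), ENNReal.ofReal (dist x y ^ (-(m:ℝ))) = ⊤ :=
        top_le_iff.mp (le_trans (le_of_eq (inner_div m hm y hρ).symm) (lintegral_mono_set hsubV))
      rw [hgrepr y, htop]
      simpa using hhnn y
    · exact absurd heq hy
    · -- y outside the closed ball
      obtain ⟨dd, hdd⟩ : ∃ t : ℝ, t = dist y cV - ℓV/2 := ⟨_, rfl⟩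
      have hddpos : 0 < dd := by rw [hdd]; linarith
      have hDy : D y = dd := by
        rw [hD]; simp only; rw [hdd]
        exact max_eq_left (by linarith)
      have hddle : dd ≤ ℓV := by
        have h0 : dist y cV ≤ 3*ℓV/2 := mem_closedBall.mp (h3V hyK)
        rw [hdd]; linarith
      obtain ⟨r, hr⟩ : ∃ t : ℝ, t = 2*ℓV/dd := ⟨_, rfl⟩
      have hrpos : 0 < r := by rw [hr]; positivity
      have hr2 : 2 ≤ r := by
        rw [hr, le_div_iff₀ hddpos]; linarith
      have hlogrnn : 0 ≤ Real.log r := Real.log_nonneg (by linarith)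
      obtain ⟨N, hN⟩ : ∃ n : ℕ, n = ⌊Real.logb 2 r⌋₊ + 1 := ⟨_, rfl⟩
      have hlogbnn : 0 ≤ Real.logb 2 r := Real.logb_nonneg one_lt_two (by linarith)
      have hcov : closedBall cV (ℓV/2) ⊆ closedBall y (dd * 2^N) \ ball y dd := by
        intro x hx
        have hx1 : dist x cV ≤ ℓV/2 := mem_closedBall.mp hx
        have h3 : dist y cV = ℓV/2 + dd := by rw [hdd]; ring
        have hxy : dist x y ≤ ℓV + dd := by
          have h1 := dist_triangle x cV y
          have h2 : dist cV y = dist y cV := dist_comm cV y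
          linarith
        constructor
        · have h2N : r ≤ 2^N := by
            have h1 : Real.logb 2 r ≤ (N:ℝ) := by
              rw [hN]; push_cast
              exact (Nat.lt_floor_add_one _).le
            calc r = 2^(Real.logb 2 r) := (Real.rpow_logb two_pos (by norm_num) hrpos).symm
              _ ≤ 2^((N:ℝ)) := Real.rpow_le_rpow_of_exponent_le one_le_two h1
              _ = 2^N := Real.rpow_natCast 2 N
          have h5 : 2*ℓV ≤ dd * 2^N := by
            rw [hr, div_le_iff₀ hddpos] at h2N
            linarith
          exact mem_closedBall.mpr (by linarith)
        · intro hball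
          have h6 : dist x y < dd := mem_ball.mp hball
          have h7 := dist_triangle y x cV
          have h8 : dist y x = dist x y := dist_comm y x
          linarith
      have hbound := le_trans (lintegral_mono_set hcov) (shell_upper m hm y hddpos N)
      have hfin : ((N:ℝ≥0∞) * ENNReal.ofReal (4^m)) ≠ ⊤ :=
        ENNReal.mul_ne_top (ENNReal.natCast_ne_top N) ENNReal.ofReal_ne_top
      have hgle : g y ≤ (N:ℝ) * 4^m := by
        rw [hgrepr y]
        refine le_trans (ENNReal.toReal_mono hfin hbound) (le_of_eq ?_)
        simp [ENNReal.toReal_mul, ENNReal.toReal_ofReal (by positivity : (0:ℝ) ≤ 4^m)]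
      have hNle : (N:ℝ) ≤ Real.logb 2 r + 1 := by
        rw [hN]; push_cast
        have := Nat.floor_le hlogbnn
        linarith
      have hhy : h y = A * (1 + Real.log r) := by
        rw [hh]; simp only
        rw [hDy, show 2*ℓV/dd = r from hr.symm, max_eq_right hlogrnn]
      rw [hhy]
      have hlog2 : (0.6931471803:ℝ) < Real.log 2 := Real.log_two_gt_d9
      have hdivle : Real.log r / Real.log 2 ≤ 2 * Real.log r := by
        rw [div_le_iff₀ (by linarith)]
        nlinarith
      have hlogb_eq : Real.logb 2 r = Real.log r / Real.log 2 := rfl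
      calc g y ≤ (N:ℝ) * 4^m := hgle
        _ ≤ (Real.logb 2 r + 1) * 4^m :=
            mul_le_mul_of_nonneg_right hNle (by positivity)
        _ ≤ A * (1 + Real.log r) := by
            rw [hA, hlogb_eq]
            nlinarith [pow_pos (by norm_num : (0:ℝ) < 4) m]
  -- Step C : outer estimate
  have hKvol : volume (closedBall cK (ℓK/2)) = ENNReal.ofReal (ℓK^m) := by
    rw [Real.volume_pi_closedBall cK (by positivity), Fintype.card_fin,
      show 2*(ℓK/2) = ℓK by ring]
  have hrKpos : (0:ℝ) < 2*ℓV/ℓK := by positivity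
  have hlog2nn : (0:ℝ) ≤ Real.log 2 := Real.log_nonneg one_le_two
  have hlogK : Real.log 2 ≤ Real.log (2*ℓV/ℓK) :=
    Real.log_le_log two_pos (by rw [le_div_iff₀ hℓK]; linarith)
  have hlogKnn : 0 ≤ Real.log (2*ℓV/ℓK) := le_trans hlog2nn hlogK
  -- pointwise split of h on K
  have hsplit : ∀ y ∈ closedBall cK (ℓK/2),
      ENNReal.ofReal (h y) ≤ ENNReal.ofReal (A*(1+Real.log (2*ℓV/ℓK)))
        + ENNReal.ofReal (A * max 0 (Real.log (ℓK / D y))) := by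
    intro y hyK
    rw [← ENNReal.ofReal_add (by positivity) (by positivity)]
    apply ENNReal.ofReal_le_ofReal
    rw [hh]; simp only
    rcases eq_or_lt_of_le (hDnn y) with h0 | h0
    · have hz : (2*ℓV / D y) = 0 := by rw [← h0, div_zero]
      rw [hz, Real.log_zero, max_self]
      have h1 : (0:ℝ) ≤ max 0 (Real.log (ℓK / D y)) := le_max_left _ _
      nlinarith
    · have hDle : D y ≤ ℓV := by
        have h1 : dist y cV ≤ 3*ℓV/2 := mem_closedBall.mp (h3V hyK)
        rw [hD]; simp only
        exact max_le (by linarith) hℓV.le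
      have hsplit2 : Real.log (2*ℓV / D y) = Real.log (2*ℓV/ℓK) + Real.log (ℓK / D y) := by
        rw [← Real.log_mul (ne_of_gt hrKpos) (by positivity : ℓK / D y ≠ 0)]
        congr 1
        field_simp
      have hmax : max 0 (Real.log (2*ℓV / D y))
          ≤ Real.log (2*ℓV/ℓK) + max 0 (Real.log (ℓK / D y)) := by
        apply max_le
        · have := le_max_left (0:ℝ) (Real.log (ℓK / D y)); linarith
        · rw [hsplit2]
          have := le_max_right (0:ℝ) (Real.log (ℓK / D y)); linarith
      nlinarith
  -- the layered integral J
  obtain ⟨Q, hQdef⟩ : ∃ Q : (Fin m → ℝ) → ℝ≥0∞,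
      Q = fun y => ENNReal.ofReal (max 0 (Real.log (ℓK / D y))) := ⟨_, rfl⟩
  have hQmeas : Measurable Q := by
    rw [hQdef]
    exact (measurable_const.max ((measurable_const.div hDmeas).log)).ennreal_ofReal
  obtain ⟨E, hEdef⟩ : ∃ E : ℕ → Set (Fin m → ℝ), E = fun k =>
      {y | y ∈ closedBall cK (ℓK/2) ∧ ℓK/2^(k+1) < D y ∧ D y ≤ ℓK/2^k} := ⟨_, rfl⟩
  obtain ⟨K0, hK0def⟩ : ∃ K0 : Set (Fin m → ℝ),
      K0 = {y | y ∈ closedBall cK (ℓK/2) ∧ (D y ≤ 0 ∨ ℓK < D y)} := ⟨_, rfl⟩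
  have hcoverK : closedBall cK (ℓK/2) ⊆ K0 ∪ ⋃ k, E k := by
    intro y hy
    rcases le_or_gt (D y) 0 with h0 | h0
    · left; rw [hK0def]; exact ⟨hy, Or.inl h0⟩
    rcases lt_or_ge ℓK (D y) with h1 | h1
    · left; rw [hK0def]; exact ⟨hy, Or.inr h1⟩
    · right
      have hex : ∃ k:ℕ, ℓK/2^(k+1) < D y := by
        obtain ⟨n, hn⟩ := pow_unbounded_of_one_lt (ℓK / D y) (one_lt_two (α := ℝ))
        refine ⟨n, ?_⟩
        rw [div_lt_iff₀ h0] at hn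
        rw [div_lt_iff₀ (by positivity : (0:ℝ) < 2^(n+1))]
        have : (2:ℝ)^n ≤ 2^(n+1) := pow_le_pow_right₀ one_le_two (by omega)
        nlinarith
      refine Set.mem_iUnion.mpr ⟨Nat.find hex, ?_⟩
      rw [hEdef]
      refine ⟨hy, Nat.find_spec hex, ?_⟩
      rcases Nat.eq_zero_or_pos (Nat.find hex) with hf0 | hfpos
      · rw [hf0]; simpa using h1
      · obtain ⟨j, hj⟩ := Nat.exists_eq_succ_of_ne_zero (Nat.pos_iff_ne_zero.mp hfpos)
        have hmin := Nat.find_min hex (by omega : j < Nat.find hex)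
        rw [hj]
        exact le_of_not_gt hmin
  have hQ0 : ∀ y ∈ K0, Q y = 0 := by
    intro y hy
    rw [hK0def] at hy
    rcases hy.2 with h0 | h0
    · have hD0 : D y = 0 := le_antisymm h0 (hDnn y)
      rw [hQdef]; simp [hD0]
    · have hpos : 0 < D y := lt_trans hℓK h0
      have hlt1 : ℓK / D y < 1 := (div_lt_one hpos).mpr h0
      have hlneg : Real.log (ℓK / D y) < 0 := Real.log_neg (by positivity) hlt1
      rw [hQdef]; simp only
      rw [max_eq_left hlneg.le]
      simp
  have hEk : ∀ k, (∫⁻ y in E k, Q y)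
      ≤ (m:ℝ≥0∞) * ENNReal.ofReal (((k:ℝ)+1)*(1/2)^k * (Real.log 2 * ℓK^m)) := by
    intro k
    have hq : ∀ y ∈ E k, Q y ≤ ENNReal.ofReal (((k:ℝ)+1) * Real.log 2) := by
      intro y hy
      rw [hEdef] at hy
      obtain ⟨hyK, hy1, hy2⟩ := hy
      have hDpos : 0 < D y := lt_trans (by positivity) hy1
      rw [hQdef]
      apply ENNReal.ofReal_le_ofReal
      apply max_le (by positivity)
      have h1 : ℓK / D y < 2^(k+1) := by
        rw [div_lt_iff₀ hDpos]
        rw [div_lt_iff₀ (by positivity : (0:ℝ) < 2^(k+1))] at hy1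
        linarith
      calc Real.log (ℓK / D y) ≤ Real.log ((2:ℝ)^(k+1)) :=
            Real.log_le_log (by positivity) h1.le
        _ = ((k:ℝ)+1) * Real.log 2 := by rw [Real.log_pow]; push_cast; ring
    have hvolE : volume (E k) ≤ (m:ℝ≥0∞) * ENNReal.ofReal (2*(ℓK/2^(k+1))*ℓK^(m-1)) := by
      have hsubE : E k ⊆ {y : Fin m → ℝ | y ∈ closedBall cK (ℓK/2) ∧
          ℓV/2 + ℓK/2^(k+1) < dist y cV ∧
          dist y cV ≤ (ℓV/2 + ℓK/2^(k+1)) + ℓK/2^(k+1)} := by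
        intro y hy
        rw [hEdef] at hy
        obtain ⟨hyK, hy1, hy2⟩ := hy
        have hDpos : 0 < D y := lt_trans (by positivity) hy1
        have ha : 0 < dist y cV - ℓV/2 := by
          by_contra hc
          push_neg at hc
          rw [hD] at hDpos; simp only at hDpos
          rw [max_eq_right hc] at hDpos
          exact lt_irrefl 0 hDpos
        have hDeq : D y = dist y cV - ℓV/2 := by
          rw [hD]; simp only; exact max_eq_left ha.le
        rw [hDeq] at hy1 hy2
        have hpow : ℓK/2^k = 2*(ℓK/2^(k+1)) := by
          rw [pow_succ]; ring
        refine ⟨hyK, by linarith, ?_⟩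
        rw [hpow] at hy2; linarith
      refine le_trans (measure_mono hsubE) ?_
      exact slab m hm cK cV hℓK (by positivity) (by positivity)
    calc (∫⁻ y in E k, Q y)
        ≤ ∫⁻ _y in E k, ENNReal.ofReal (((k:ℝ)+1) * Real.log 2) :=
          setLIntegral_mono measurable_const hq
      _ = ENNReal.ofReal (((k:ℝ)+1) * Real.log 2) * volume (E k) := setLIntegral_const _ _
      _ ≤ ENNReal.ofReal (((k:ℝ)+1) * Real.log 2) *
          ((m:ℝ≥0∞) * ENNReal.ofReal (2*(ℓK/2^(k+1))*ℓK^(m-1))) := by gcongr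
      _ = (m:ℝ≥0∞) * (ENNReal.ofReal (((k:ℝ)+1) * Real.log 2) *
          ENNReal.ofReal (2*(ℓK/2^(k+1))*ℓK^(m-1))) := by ring
      _ = (m:ℝ≥0∞) * ENNReal.ofReal (((k:ℝ)+1)*(1/2)^k * (Real.log 2 * ℓK^m)) := by
          rw [← ENNReal.ofReal_mul (by positivity)]
          congr 1
          have hℓKm : ℓK * ℓK^(m-1) = ℓK^m := by
            rw [← pow_succ']
            congr 1
            omega
          have h2p : (2:ℝ)*(ℓK/2^(k+1)) = ℓK * (1/2)^k := by
            rw [pow_succ, div_pow, one_pow]; field_simp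
          rw [h2p, show ((k:ℝ)+1) * Real.log 2 * (ℓK * (1/2)^k * ℓK^(m-1))
            = ((k:ℝ)+1)*(1/2)^k * (Real.log 2 * (ℓK * ℓK^(m-1))) by ring, hℓKm]
  have hJ : (∫⁻ y in closedBall cK (ℓK/2), Q y)
      ≤ (m:ℝ≥0∞) * ENNReal.ofReal (8*(Real.log 2 * ℓK^m)) := by
    have hK0zero : (∫⁻ y in K0, Q y) = 0 := by
      have : (∫⁻ y in K0, Q y) ≤ ∫⁻ _y in K0, 0 :=
        setLIntegral_mono measurable_const (fun y hy => le_of_eq (hQ0 y hy))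
      simpa using this
    calc (∫⁻ y in closedBall cK (ℓK/2), Q y)
        ≤ ∫⁻ y in K0 ∪ ⋃ k, E k, Q y := lintegral_mono_set hcoverK
      _ ≤ (∫⁻ y in K0, Q y) + ∫⁻ y in ⋃ k, E k, Q y := lintegral_union_le _ _ _
      _ ≤ 0 + ∑' k, ∫⁻ y in E k, Q y := add_le_add (le_of_eq hK0zero) (lintegral_iUnion_le _ _)
      _ ≤ ∑' k : ℕ, (m:ℝ≥0∞) * ENNReal.ofReal (((k:ℝ)+1)*(1/2)^k * (Real.log 2 * ℓK^m)) := by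
          rw [zero_add]; exact ENNReal.tsum_le_tsum hEk
      _ = (m:ℝ≥0∞) * ∑' k : ℕ, ENNReal.ofReal (((k:ℝ)+1)*(1/2)^k * (Real.log 2 * ℓK^m)) :=
          ENNReal.tsum_mul_left
      _ ≤ (m:ℝ≥0∞) * ENNReal.ofReal (8*(Real.log 2 * ℓK^m)) :=
          mul_le_mul_right (series_aux _ (by positivity)) _
  -- assemble the lintegral bound for h
  obtain ⟨B, hBdef⟩ : ∃ B : ℝ≥0∞, B = ENNReal.ofReal (A*(1+Real.log (2*ℓV/ℓK)))
      * ENNReal.ofReal (ℓK^m)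
      + ENNReal.ofReal A * ((m:ℝ≥0∞) * ENNReal.ofReal (8*(Real.log 2 * ℓK^m))) := ⟨_, rfl⟩
  have hLB : (∫⁻ y in closedBall cK (ℓK/2), ENNReal.ofReal (h y)) ≤ B := by
    calc (∫⁻ y in closedBall cK (ℓK/2), ENNReal.ofReal (h y))
        ≤ ∫⁻ y in closedBall cK (ℓK/2), (ENNReal.ofReal (A*(1+Real.log (2*ℓV/ℓK)))
            + ENNReal.ofReal (A * max 0 (Real.log (ℓK / D y)))) := by
          refine setLIntegral_mono (Measurable.const_add ?_ _) hsplit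
          exact (measurable_const.mul
            (measurable_const.max ((measurable_const.div hDmeas).log))).ennreal_ofReal
      _ = ENNReal.ofReal (A*(1+Real.log (2*ℓV/ℓK))) * volume (closedBall cK (ℓK/2))
          + ∫⁻ y in closedBall cK (ℓK/2), ENNReal.ofReal (A * max 0 (Real.log (ℓK / D y))) := by
          rw [lintegral_add_left measurable_const, setLIntegral_const]
      _ ≤ B := by
          rw [hBdef, hKvol]
          apply add_le_add le_rfl
          have hptmul : ∀ y : Fin m → ℝ, ENNReal.ofReal (A * max 0 (Real.log (ℓK / D y)))
              = ENNReal.ofReal A * Q y := by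
            intro y
            rw [hQdef]
            exact ENNReal.ofReal_mul hApos.le
          simp_rw [hptmul]
          rw [lintegral_const_mul _ hQmeas]
          exact mul_le_mul_right hJ _
  have hBne : B ≠ ⊤ := by
    rw [hBdef]
    exact ENNReal.add_ne_top.mpr ⟨ENNReal.mul_ne_top ENNReal.ofReal_ne_top ENNReal.ofReal_ne_top,
      ENNReal.mul_ne_top ENNReal.ofReal_ne_top
        (ENNReal.mul_ne_top (ENNReal.natCast_ne_top m) ENNReal.ofReal_ne_top)⟩
  -- integrability of h on K
  have hhint : IntegrableOn h (closedBall cK (ℓK/2)) volume := by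
    refine ⟨hhmeas.aestronglyMeasurable, ?_⟩
    rw [hasFiniteIntegral_iff_ofReal (Filter.Eventually.of_forall hhnn)]
    exact lt_of_le_of_lt hLB hBne.lt_top
  -- final chain
  have step1 : (∫ y in closedBall cK (ℓK/2), g y) ≤ ∫ y in closedBall cK (ℓK/2), h y := by
    apply integral_mono_of_nonneg (Filter.Eventually.of_forall fun y => hg_nonneg y) hhint
    exact (ae_restrict_iff' measurableSet_closedBall).mpr hpt
  have step2 : (∫ y in closedBall cK (ℓK/2), h y)
      = (∫⁻ y in closedBall cK (ℓK/2), ENNReal.ofReal (h y)).toReal :=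
    integral_eq_lintegral_of_nonneg_ae (Filter.Eventually.of_forall hhnn)
      hhmeas.aestronglyMeasurable
  have step3 : (∫⁻ y in closedBall cK (ℓK/2), ENNReal.ofReal (h y)).toReal ≤ B.toReal :=
    ENNReal.toReal_mono hBne hLB
  have hBto : B.toReal = A*(1+Real.log (2*ℓV/ℓK)) * ℓK^m + A * (m * (8*(Real.log 2 * ℓK^m))) := by
    rw [hBdef, ENNReal.toReal_add (ENNReal.mul_ne_top ENNReal.ofReal_ne_top ENNReal.ofReal_ne_top)
      (ENNReal.mul_ne_top ENNReal.ofReal_ne_top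
        (ENNReal.mul_ne_top (ENNReal.natCast_ne_top m) ENNReal.ofReal_ne_top)),
      ENNReal.toReal_mul, ENNReal.toReal_mul, ENNReal.toReal_mul,
      ENNReal.toReal_ofReal (by positivity),
      ENNReal.toReal_ofReal (by positivity : (0:ℝ) ≤ ℓK^m),
      ENNReal.toReal_ofReal hApos.le,
      ENNReal.toReal_ofReal (by positivity)]
    simp
  -- final real algebra
  have hlogsplit : Real.log (2*ℓV/ℓK) = Real.log 2 + Real.log (ℓV/ℓK) := by
    rw [show 2*ℓV/ℓK = 2*(ℓV/ℓK) by ring,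
      Real.log_mul two_ne_zero (by positivity : ℓV/ℓK ≠ 0)]
  have hlrnn : 0 ≤ Real.log (ℓV/ℓK) :=
    Real.log_nonneg ((one_le_div hℓK).mpr hKV)
  have hlog2lt : Real.log 2 < 1 := by
    have := Real.log_two_lt_d9; linarith
  have hfinal : A*(1+Real.log (2*ℓV/ℓK)) * ℓK^m + A * (m * (8*(Real.log 2 * ℓK^m)))
      ≤ 4^m * (16*m+4) * ℓK^m * (1 + Real.log (ℓV/ℓK)) := by
    rw [hlogsplit, hA]
    have hm1 : (1:ℝ) ≤ m := by exact_mod_cast hm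
    have hkey : 2*(1 + (Real.log 2 + Real.log (ℓV/ℓK)) + 8*(m:ℝ)*Real.log 2)
        ≤ (16*(m:ℝ)+4)*(1+Real.log (ℓV/ℓK)) := by
      nlinarith [mul_nonneg (by linarith : (0:ℝ) ≤ (m:ℝ)) hlrnn,
        mul_nonneg (by linarith : (0:ℝ) ≤ (m:ℝ)) (by linarith : (0:ℝ) ≤ 1 - Real.log 2)]
    have hmul := mul_le_mul_of_nonneg_right hkey
      (by positivity : (0:ℝ) ≤ 4^m * ℓK^m)
    nlinarith [hmul]
  calc (∫ y in closedBall cK (ℓK/2), ∫ x in closedBall cV (ℓV/2), dist x y ^ (-(m:ℝ)))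
      = ∫ y in closedBall cK (ℓK/2), g y := by rw [hg]
    _ ≤ ∫ y in closedBall cK (ℓK/2), h y := step1
    _ = (∫⁻ y in closedBall cK (ℓK/2), ENNReal.ofReal (h y)).toReal := step2
    _ ≤ B.toReal := step3
    _ = A*(1+Real.log (2*ℓV/ℓK)) * ℓK^m + A * (m * (8*(Real.log 2 * ℓK^m))) := hBto
    _ ≤ 4^m * (16*m+4) * ℓK^m * (1 + Real.log (ℓV/ℓK)) := hfinal
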